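/- Let b = Γ↷^b(X,μ) be a measure preserving action of a countable group Γ. Let B_1 = { ι_{η_{α(n)}}×b : n ≥ 1 } where α(n) = (1/n,…,1/n) ∈ [0,1]^n, and let B_2 = { ι_{η_α}×b : n ≥ 1, α ∈ [0,1]^n with Σ_{i<n} α_i = 1 }. Then ι×b, B_1, and B_2 are pairwise weakly equivalent (as sets of actions). -/

import Mathlib

open scoped NNReal ENNReal

/-- A measure preserving action of a group `Γ` on a standard probability space. -/
structure MPAction (Γ : Type) [Group Γ] where
  X : Type
  [mX : MeasurableSpace X]
  [sb : StandardBorelSpace X]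
  μ : MeasureTheory.Measure X
  [prob : MeasureTheory.IsProbabilityMeasure μ]
  act : Γ → X → X
  one_act : ∀ x, act 1 x = x
  mul_act : ∀ γ δ x, act (γ * δ) x = act γ (act δ x)
  pres : ∀ γ : Γ, MeasureTheory.MeasurePreserving (act γ) μ μ

attribute [instance] MPAction.mX MPAction.sb MPAction.prob

open MeasureTheory Topology Filter

variable {Γ : Type} [Group Γ]

/-- A finite Borel partition of a space. -/
def IsPartition {X : Type} [MeasurableSpace X] {k : ℕ} (A : Fin k → Set X) : Prop :=
  (∀ i, MeasurableSet (A i)) ∧ (∀ i j, i ≠ j → Disjoint (A i) (A j)) ∧ (⋃ i, A i) = Set.univ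

/-- Weak containment of a measure preserving action in an action on a (possibly
nonstandard) measure space, expressed at the level of the underlying data. -/
def WCgen {X Y : Type} [MeasurableSpace X] [MeasurableSpace Y]
    (actA : Γ → X → X) (μ : Measure X) (actB : Γ → Y → Y) (ν : Measure Y) : Prop :=
  ∀ (k : ℕ) (A : Fin k → Set X), IsPartition A →
    ∀ (F : Finset Γ) (ε : ℝ), 0 < ε →
      ∃ B : Fin k → Set Y, IsPartition B ∧
        ∀ γ ∈ F, ∀ i j : Fin k,
          |(μ (actA γ '' A i ∩ A j)).toReal - (ν (actB γ '' B i ∩ B j)).toReal| < ε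

/-- Weak containment `a ≺ b` of measure preserving actions. -/
def MPAction.WC (a b : MPAction Γ) : Prop := WCgen a.act a.μ b.act b.μ

/-- Weak equivalence `a ∼ b` of measure preserving actions. -/
def MPAction.WE (a b : MPAction Γ) : Prop := a.WC b ∧ b.WC a

/-- The diagonal product of two measure preserving actions. -/
noncomputable def MPAction.prod (a b : MPAction Γ) : MPAction Γ where
  X := a.X × b.X
  μ := a.μ.prod b.μ
  act γ p := (a.act γ p.1, b.act γ p.2)
  one_act p := by cases p with | mk x y => simp [a.one_act, b.one_act]
  mul_act γ δ p := by cases p with | mk x y => simp [a.mul_act, b.mul_act]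
  pres γ := (a.pres γ).prod (b.pres γ)

/-- The trivial (identity) action of `Γ` on a standard probability space `(Z, η)`. -/
def trivialAction (Γ : Type) [Group Γ] (Z : Type) [MeasurableSpace Z] [StandardBorelSpace Z]
    (η : Measure Z) [IsProbabilityMeasure η] : MPAction Γ where
  X := Z
  μ := η
  act _ z := z
  one_act _ := rfl
  mul_act _ _ _ := rfl
  pres _ := MeasurePreserving.id η

/-- Ergodicity: every invariant Borel set is null or conull. -/
def MPAction.IsErgodic (a : MPAction Γ) : Prop :=
  ∀ A : Set a.X, MeasurableSet A → (∀ γ : Γ, a.act γ ⁻¹' A = A) → a.μ A = 0 ∨ a.μ A = 1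

/-- Freeness: for every nonidentity group element, the set of fixed points is null. -/
def MPAction.IsFree (a : MPAction Γ) : Prop :=
  ∀ γ : Γ, γ ≠ 1 → a.μ {x | a.act γ x = x} = 0

/-- Strong ergodicity: every asymptotically invariant sequence of Borel sets is trivial. -/
def MPAction.IsStronglyErgodic (b : MPAction Γ) : Prop :=
  ∀ B : ℕ → Set b.X, (∀ n, MeasurableSet (B n)) →
    (∀ γ : Γ, Tendsto (fun n => (b.μ (symmDiff (b.act γ '' B n) (B n))).toReal) atTop (nhds 0)) →
    Tendsto (fun n => (b.μ (B n)).toReal * (1 - (b.μ (B n)).toReal)) atTop (nhds 0)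

/-- Stable weak containment: `a ≺ ι × b` where `ι` is the trivial action on a standard
non-atomic probability space. -/
def MPAction.SWC (a b : MPAction Γ) : Prop :=
  ∀ (Z : Type) [MeasurableSpace Z] [StandardBorelSpace Z] (η : Measure Z)
    [IsProbabilityMeasure η] [NullSingletonClass η],
    a.WC ((trivialAction Γ Z η).prod b)

/-- Stable weak equivalence. -/
def MPAction.SWE (a b : MPAction Γ) : Prop := a.SWC b ∧ b.SWC a

/-- Amenability: existence of a left-invariant finitely additive probability measure on
all subsets of the group. -/
def IsAmenable (Γ : Type) [Group Γ] : Prop :=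
  ∃ m : Set Γ → ℝ, (∀ A, 0 ≤ m A) ∧ m Set.univ = 1 ∧
    (∀ A B : Set Γ, Disjoint A B → m (A ∪ B) = m A + m B) ∧
    (∀ (γ : Γ) (A : Set Γ), m ((γ * ·) '' A) = m A)
open MeasureTheory Topology Filter

/-- The shift action of `Γ` on `K ^ Γ`. -/
def shiftMap (Γ : Type) [Group Γ] (K : Type) (γ : Γ) : (Γ → K) → (Γ → K) :=
  fun f δ => f (γ⁻¹ * δ)

/-- The itinerary map `Φ^{φ,a} : X → K^Γ` associated to an observable `φ : X → K`. -/
def itinMap {Γ : Type} [Group Γ] (a : MPAction Γ) (K : Type) (φ : a.X → K) : a.X → (Γ → K) :=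
  fun x γ => φ (a.act γ⁻¹ x)

/-- `E(a, K)`: the set of shift-invariant measures on `K^Γ` arising as pushforwards of the
measure of `a` under itinerary maps; equivalently, the shift-invariant factors of `a`. -/
def actE {Γ : Type} [Group Γ] (a : MPAction Γ) (K : Type) [MeasurableSpace K] :
    Set (ProbabilityMeasure (Γ → K)) :=
  {ν | ∃ φ : a.X → K, Measurable φ ∧
    (ν : Measure (Γ → K)) = Measure.map (itinMap a K φ) a.μ}

/-- The convex hull (set of finite convex combinations) of a set of probability measures. -/
def convexCombos {Ω : Type} [MeasurableSpace Ω] (E : Set (ProbabilityMeasure Ω)) :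
    Set (ProbabilityMeasure Ω) :=
  {ν | ∃ (n : ℕ) (w : Fin n → NNReal) (μs : Fin n → ProbabilityMeasure Ω),
      (∑ i, w i) = 1 ∧ (∀ i, μs i ∈ E) ∧
      (ν : Measure Ω) = ∑ i, (w i : ENNReal) • (μs i : Measure Ω)}

/-- Weak containment for sets of measure preserving actions. -/
def SetWC {Γ : Type} [Group Γ] (𝒜 ℬ : Set (MPAction Γ)) : Prop :=
  ∀ a ∈ 𝒜, ∀ (k : ℕ) (P : Fin k → Set a.X), IsPartition P →
    ∀ (F : Finset Γ) (ε : ℝ), 0 < ε →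
      ∃ b ∈ ℬ, ∃ Q : Fin k → Set b.X, IsPartition Q ∧
        ∀ γ ∈ F, ∀ i j : Fin k,
          |(a.μ (a.act γ '' P i ∩ P j)).toReal - (b.μ (b.act γ '' Q i ∩ Q j)).toReal| < ε

/-- Weak equivalence for sets of measure preserving actions. -/
def SetWE {Γ : Type} [Group Γ] (𝒜 ℬ : Set (MPAction Γ)) : Prop := SetWC 𝒜 ℬ ∧ SetWC ℬ 𝒜

open MeasureTheory Topology Filter

/-- The discrete probability measure on `Fin n` with weights `α`. -/
noncomputable def discreteMeasure {n : ℕ} (α : Fin n → NNReal) : Measure (Fin n) :=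
  ∑ i, (α i : ENNReal) • Measure.dirac i

lemma discreteMeasure_isProbability {n : ℕ} (α : Fin n → NNReal) (hα : ∑ i, α i = 1) :
    IsProbabilityMeasure (discreteMeasure α) := by
  constructor
  simp only [discreteMeasure, Measure.finset_sum_apply, Measure.smul_apply, smul_eq_mul,
    Measure.dirac_apply_of_mem (Set.mem_univ _), mul_one]
  rw [← ENNReal.coe_finset_sum, hα, ENNReal.coe_one]

/-- The convex combination `Σ_{i<n} α_i b = ι_{η_α} × b` of `n` copies of `b`. -/
noncomputable def convexSumAction {Γ : Type} [Group Γ] (b : MPAction Γ) {n : ℕ}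
    (α : Fin n → NNReal) (hα : ∑ i, α i = 1) : MPAction Γ :=
  haveI := discreteMeasure_isProbability α hα
  (trivialAction Γ (Fin n) (discreteMeasure α)).prod b

lemma uniformSum (n : ℕ) (hn : 0 < n) : (∑ _i : Fin n, ((n : NNReal))⁻¹) = 1 := by
  simp only [Finset.sum_const, Finset.card_univ, Fintype.card_fin, nsmul_eq_mul]
  rw [mul_inv_cancel₀]
  exact_mod_cast hn.ne'

/-- The set of actions `ι_{η_{α(n)}} × b` for uniform weights `α(n) = (1/n, …, 1/n)`. -/
noncomputable def uniformConvexSums {Γ : Type} [Group Γ] (b : MPAction Γ) : Set (MPAction Γ) :=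
  {d | ∃ (n : ℕ) (hn : 0 < n),
    d = convexSumAction b (fun _ : Fin n => ((n : NNReal))⁻¹) (uniformSum n hn)}

/-- The set of actions `ι_{η_α} × b` over all finite convex weights `α`. -/
noncomputable def allConvexSums {Γ : Type} [Group Γ] (b : MPAction Γ) : Set (MPAction Γ) :=
  {d | ∃ (n : ℕ) (_ : 1 ≤ n) (α : Fin n → NNReal) (hα : ∑ i, α i = 1),
    d = convexSumAction b α hα}
section Auxiliary

open MeasureTheory Topology Filter

variable {Γ : Type} [Group Γ]

namespace MPAction

lemma act_measurable (a : MPAction Γ) (γ : Γ) : Measurable (a.act γ) :=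
  (a.pres γ).measurable

lemma act_image (a : MPAction Γ) (γ : Γ) (A : Set a.X) :
    a.act γ '' A = a.act γ⁻¹ ⁻¹' A := by
  ext x
  constructor
  · rintro ⟨y, hy, rfl⟩
    show a.act γ⁻¹ (a.act γ y) ∈ A
    rwa [← a.mul_act, inv_mul_cancel, a.one_act]
  · intro hx
    exact ⟨a.act γ⁻¹ x, hx, by rw [← a.mul_act, mul_inv_cancel, a.one_act]⟩

end MPAction

lemma IsPartition.preimage {X Y : Type} [MeasurableSpace X] [MeasurableSpace Y] {k : ℕ}
    {A : Fin k → Set Y} (h : IsPartition A) {T : X → Y} (hT : Measurable T) :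
    IsPartition fun i => T ⁻¹' A i := by
  obtain ⟨hm, hd, hu⟩ := h
  refine ⟨fun i => hT (hm i), fun i j hij => Disjoint.preimage _ (hd i j hij), ?_⟩
  rw [← Set.preimage_iUnion, hu, Set.preimage_univ]

lemma SetWC.trans {𝒜 ℬ 𝒞 : Set (MPAction Γ)} (h1 : SetWC 𝒜 ℬ) (h2 : SetWC ℬ 𝒞) :
    SetWC 𝒜 𝒞 := by
  intro a ha k P hP F ε hε
  obtain ⟨b', hb', Q, hQ, hQval⟩ := h1 a ha k P hP F (ε/2) (by linarith)
  obtain ⟨c', hc', R, hR, hRval⟩ := h2 b' hb' k Q hQ F (ε/2) (by linarith)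
  refine ⟨c', hc', R, hR, fun γ hγ i j => ?_⟩
  calc |(a.μ (a.act γ '' P i ∩ P j)).toReal - (c'.μ (c'.act γ '' R i ∩ R j)).toReal|
      ≤ |(a.μ (a.act γ '' P i ∩ P j)).toReal - (b'.μ (b'.act γ '' Q i ∩ Q j)).toReal| +
        |(b'.μ (b'.act γ '' Q i ∩ Q j)).toReal - (c'.μ (c'.act γ '' R i ∩ R j)).toReal| :=
        abs_sub_le _ _ _
    _ < ε/2 + ε/2 := add_lt_add (hQval γ hγ i j) (hRval γ hγ i j)
    _ = ε := by ring

lemma SetWC.of_subset {𝒜 ℬ : Set (MPAction Γ)} (h : 𝒜 ⊆ ℬ) : SetWC 𝒜 ℬ :=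
  fun a ha k P hP F ε hε =>
    ⟨a, h ha, P, hP, fun γ _ i j => by simpa using hε⟩

end Auxiliary
section Sierpinski

open MeasureTheory Topology Filter Set

lemma iInter_Iic_real : ⋂ u : ℝ, Set.Iic u = (∅ : Set ℝ) := by
  ext x
  simp only [Set.mem_iInter, Set.mem_Iic, Set.mem_empty_iff_false, iff_false, not_forall, not_le]
  exact ⟨x - 1, by linarith⟩

lemma cdf_continuous (ν : Measure ℝ) [IsFiniteMeasure ν] [NullSingletonClass ν] :
    Continuous fun u => (ν (Set.Iic u)).toReal := by
  have hfin : ∀ s : Set ℝ, ν s ≠ ∞ := fun s => measure_ne_top ν s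
  set G := fun u => (ν (Set.Iic u)).toReal with hG
  have hmono : Monotone G := fun u v huv =>
    ENNReal.toReal_mono (hfin _) (measure_mono (Set.Iic_subset_Iic.2 huv))
  rw [continuous_iff_continuousAt]
  intro x
  rw [Metric.continuousAt_iff]
  intro ε hε
  have hR : Tendsto (fun n : ℕ => G (x + 1 / (n + 1))) atTop (𝓝 (G x)) := by
    have hI : ⋂ n : ℕ, Set.Iic (x + 1 / (n + 1 : ℝ)) = Set.Iic x := by
      ext y
      simp only [Set.mem_iInter, Set.mem_Iic]
      constructor
      · intro h
        by_contra hy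
        push_neg at hy
        obtain ⟨n, hn⟩ := exists_nat_one_div_lt (sub_pos.2 hy)
        have := h n
        push_cast at hn this
        linarith
      · intro h n
        have h0 : (0:ℝ) < 1 / (n + 1) := by positivity
        linarith
    have h1 : Tendsto (fun n : ℕ => ν (Set.Iic (x + 1 / (n + 1)))) atTop
        (𝓝 (ν (Set.Iic x))) := by
      have := tendsto_measure_iInter_atTop (μ := ν) (s := fun n : ℕ => Set.Iic (x + 1 / (n + 1)))
        (fun n : ℕ => measurableSet_Iic.nullMeasurableSet)
        (fun m n hmn => Set.Iic_subset_Iic.2 (by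
          have : (1:ℝ) / (n + 1) ≤ 1 / (m + 1) := by
            apply one_div_le_one_div_of_le (by positivity)
            push_cast; exact_mod_cast (by exact_mod_cast add_le_add_left (Nat.cast_le.2 hmn) 1)
          linarith)) ⟨0, hfin _⟩
      rwa [hI] at this
    exact (ENNReal.tendsto_toReal (hfin _)).comp h1
  have hL : Tendsto (fun n : ℕ => G (x - 1 / (n + 1))) atTop (𝓝 (G x)) := by
    have hI : ⋃ n : ℕ, Set.Iic (x - 1 / (n + 1 : ℝ)) = Set.Iio x := by
      ext y
      simp only [Set.mem_iUnion, Set.mem_Iic, Set.mem_Iio]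
      constructor
      · rintro ⟨n, hn⟩
        have h0 : (0:ℝ) < 1 / ((n:ℝ) + 1) := by positivity
        linarith
      · intro h
        obtain ⟨n, hn⟩ := exists_nat_one_div_lt (sub_pos.2 h)
        exact ⟨n, by push_cast at hn ⊢; linarith⟩
    have h1 : Tendsto (fun n : ℕ => ν (Set.Iic (x - 1 / (n + 1)))) atTop
        (𝓝 (ν (Set.Iio x))) := by
      have := tendsto_measure_iUnion_atTop (μ := ν) (s := fun n : ℕ => Set.Iic (x - 1 / (n+1)))
        (fun m n hmn => Set.Iic_subset_Iic.2 (by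
          have : (1:ℝ) / (n + 1) ≤ 1 / (m + 1) := by
            apply one_div_le_one_div_of_le (by positivity)
            exact_mod_cast add_le_add_left (Nat.cast_le.2 hmn) 1
          linarith))
      rwa [hI] at this
    have hio : ν (Set.Iio x) = ν (Set.Iic x) := measure_congr (Iio_ae_eq_Iic (μ := ν) (a := x))
    rw [hio] at h1
    exact (ENNReal.tendsto_toReal (hfin _)).comp h1
  obtain ⟨n₁, hn₁⟩ := (hR.eventually_lt_const (lt_add_of_pos_right (G x) hε)).exists
  obtain ⟨n₂, hn₂⟩ := (hL.eventually_const_lt (sub_lt_self (G x) hε)).exists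
  refine ⟨min (1 / (n₁ + 1)) (1 / (n₂ + 1)), lt_min (by positivity) (by positivity), ?_⟩
  intro y hy
  rw [Real.dist_eq] at hy ⊢
  rw [abs_lt] at hy
  have hy1 : y ≤ x + 1 / (n₁ + 1) := by
    have := hy.2
    have h0 := min_le_left (1 / ((n₁:ℝ) + 1)) (1 / ((n₂:ℝ) + 1))
    linarith
  have hy2 : x - 1 / (n₂ + 1) ≤ y := by
    have := hy.1
    have h0 := min_le_right (1 / ((n₁:ℝ) + 1)) (1 / ((n₂:ℝ) + 1))
    linarith
  have hup : G y ≤ G (x + 1 / (n₁ + 1)) := hmono hy1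
  have hlow : G (x - 1 / (n₂ + 1)) ≤ G y := hmono hy2
  rw [abs_lt]
  constructor <;> [linarith; linarith]

/-- Sierpiński: a nonatomic finite measure on a standard Borel space attains every
value below the measure of a given measurable set, on a subset of it. -/
lemma exists_subset_measure_eq' {Z : Type} [MeasurableSpace Z] [StandardBorelSpace Z]
    (η : Measure Z) [IsFiniteMeasure η] [NullSingletonClass η] {s : Set Z} (hs : MeasurableSet s)
    {r : ℝ≥0∞} (hr : r ≤ η s) : ∃ t, t ⊆ s ∧ MeasurableSet t ∧ η t = r := by
  rcases eq_or_lt_of_le hr with heq | hlt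
  · exact ⟨s, subset_rfl, hs, heq.symm⟩
  rcases eq_or_ne r 0 with rfl | hr0
  · exact ⟨∅, Set.empty_subset _, MeasurableSet.empty, measure_empty⟩
  have hrtop : r ≠ ∞ := (hlt.trans_le le_top).ne
  set f := MeasureTheory.embeddingReal Z with hf_def
  have hf := MeasureTheory.measurableEmbedding_embeddingReal Z
  set ν : Measure ℝ := Measure.map f (η.restrict s) with hν
  have hν_apply : ∀ u : Set ℝ, MeasurableSet u → ν u = η (f ⁻¹' u ∩ s) := by
    intro u hu
    rw [hν, hf.map_apply, Measure.restrict_apply (hf.measurable hu)]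
  haveI : IsFiniteMeasure ν := by
    constructor
    rw [hν_apply _ MeasurableSet.univ]
    exact (measure_mono (Set.inter_subset_right)).trans_lt (measure_lt_top η s)
  haveI : NullSingletonClass ν := by
    constructor
    intro x
    have hsub : (f ⁻¹' {x}).Subsingleton := fun a ha b hb =>
      hf.injective (ha.trans hb.symm)
    refine le_antisymm ?_ zero_le
    rw [hν_apply _ (measurableSet_singleton x)]
    exact le_trans (measure_mono Set.inter_subset_left)
      (le_of_eq (hsub.measure_zero η))
  have hν_univ : ν Set.univ = η s := by
    rw [hν_apply _ MeasurableSet.univ, Set.preimage_univ, Set.univ_inter]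
  have hfin : ∀ u : Set ℝ, ν u ≠ ∞ := fun u => measure_ne_top ν u
  -- find endpoints
  have htop : Tendsto (fun u : ℝ => ν (Set.Iic u)) atTop (𝓝 (ν Set.univ)) :=
    tendsto_measure_Iic_atTop ν
  have hbot : Tendsto (fun u : ℝ => ν (Set.Iic u)) atBot (𝓝 0) := by
    have := tendsto_measure_iInter_atBot (μ := ν) (s := fun u : ℝ => Set.Iic u)
      (fun u : ℝ => measurableSet_Iic.nullMeasurableSet) (fun u v huv => Set.Iic_subset_Iic.2 huv)
      ⟨0, hfin _⟩
    rwa [iInter_Iic_real, measure_empty] at this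
  have hrlt : r < ν Set.univ := by rwa [hν_univ]
  obtain ⟨bb, hbb⟩ := (htop.eventually_const_lt hrlt).exists
  obtain ⟨aa, haa⟩ := (hbot.eventually_lt_const (pos_iff_ne_zero.2 hr0)).exists
  set a := min aa bb with ha_def
  have haless : ν (Set.Iic a) < r :=
    lt_of_le_of_lt (measure_mono (Set.Iic_subset_Iic.2 (min_le_left _ _))) haa
  have hab : a ≤ bb := min_le_right _ _
  set G := fun u => (ν (Set.Iic u)).toReal with hG
  have hcont : Continuous G := cdf_continuous ν
  have hmem : r.toReal ∈ Set.Icc (G a) (G bb) := by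
    constructor
    · exact le_of_lt (ENNReal.toReal_lt_toReal (hfin _) hrtop |>.2 haless)
    · exact le_of_lt (ENNReal.toReal_lt_toReal hrtop (hfin _) |>.2 hbb)
  obtain ⟨u, _, hu⟩ := intermediate_value_Icc hab hcont.continuousOn hmem
  have hru : ν (Set.Iic u) = r := by
    have := hu
    rw [hG] at this
    exact (ENNReal.toReal_eq_toReal_iff' (hfin _) hrtop).1 this
  refine ⟨s ∩ f ⁻¹' (Set.Iic u), Set.inter_subset_left,
    hs.inter (hf.measurable measurableSet_Iic), ?_⟩
  rw [Set.inter_comm, ← hν_apply _ measurableSet_Iic, hru]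

end Sierpinski
section PartitionMachinery

open MeasureTheory Topology Filter

/-- Partition of a set into finitely many measurable pieces with prescribed measures. -/
lemma exists_partition_aux {Z : Type} [MeasurableSpace Z] [StandardBorelSpace Z]
    (η : Measure Z) [IsFiniteMeasure η] [NullSingletonClass η] :
    ∀ (n : ℕ) (s : Set Z), MeasurableSet s → ∀ β : Fin (n+1) → ℝ≥0∞, (∑ i, β i) = η s →
    ∃ W : Fin (n+1) → Set Z, (∀ l, MeasurableSet (W l)) ∧ Pairwise (Function.onFun Disjoint W) ∧
      (⋃ l, W l) = s ∧ ∀ l, η (W l) = β l := by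
  intro n
  induction n with
  | zero =>
    intro s hs β hβ
    haveI : Subsingleton (Fin (0+1)) := ⟨fun a b => by omega⟩
    refine ⟨fun _ => s, fun _ => hs, ?_, Set.iUnion_const s, fun l => ?_⟩
    · intro i j hij; exact absurd (Subsingleton.elim i j) hij
    · rw [← hβ, Fin.sum_univ_one, Subsingleton.elim l 0]
  | succ n ih =>
    intro s hs β hβ
    have hβ0 : β 0 ≤ η s := hβ ▸ Finset.single_le_sum (fun i _ => zero_le)
      (Finset.mem_univ 0)
    obtain ⟨t, hts, htm, htμ⟩ := exists_subset_measure_eq' η hs hβ0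
    have hβ0top : β 0 ≠ ∞ := by
      intro h; rw [h] at hβ0; exact (measure_ne_top η s) (top_le_iff.1 hβ0)
    have hs' : MeasurableSet (s \ t) := hs.diff htm
    have hμs' : η (s \ t) = η s - β 0 := by
      rw [measure_diff hts htm.nullMeasurableSet (htμ ▸ hβ0top), htμ]
    rw [Fin.sum_univ_succ] at hβ
    have hsum' : (∑ i : Fin (n+1), β i.succ) = η (s \ t) := by
      rw [hμs', ← hβ, ENNReal.add_sub_cancel_left hβ0top]
    obtain ⟨W', hW'm, hW'd, hW'u, hW'μ⟩ := ih (s \ t) hs' (fun i => β i.succ) hsum'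
    have hW'sub : ∀ l, W' l ⊆ s \ t := fun l => hW'u ▸ Set.subset_iUnion W' l
    have hdtW : ∀ l, Disjoint t (W' l) := fun l =>
      Set.disjoint_sdiff_right.mono_right (hW'sub l)
    refine ⟨Fin.cases t W', ?_, ?_, ?_, ?_⟩
    · intro l
      induction l using Fin.cases with
      | zero => simpa using htm
      | succ i => simpa using hW'm i
    · intro i j hij
      induction i using Fin.cases with
      | zero =>
        induction j using Fin.cases with
        | zero => exact absurd rfl hij
        | succ j' => simpa [Function.onFun] using hdtW j'
      | succ i' =>
        induction j using Fin.cases with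
        | zero => simpa [Function.onFun] using (hdtW i').symm
        | succ j' =>
          simpa [Function.onFun] using hW'd (fun h => hij (congrArg Fin.succ h))
    · ext z
      simp only [Set.mem_iUnion]
      constructor
      · rintro ⟨l, hl⟩
        induction l using Fin.cases with
        | zero => exact hts (by simpa using hl)
        | succ i => exact (hW'sub i (by simpa using hl)).1
      · intro hz
        by_cases hzt : z ∈ t
        · exact ⟨0, by simpa using hzt⟩
        · have hz' : z ∈ ⋃ l, W' l := by rw [hW'u]; exact ⟨hz, hzt⟩
          obtain ⟨i, hi⟩ := Set.mem_iUnion.1 hz'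
          exact ⟨i.succ, by simpa using hi⟩
    · intro l
      induction l using Fin.cases with
      | zero => simpa using htμ
      | succ i => simpa using hW'μ i

/-- Partition of the whole space with prescribed `NNReal` measures. -/
lemma exists_partition_with_measures {Z : Type} [MeasurableSpace Z] [StandardBorelSpace Z]
    (η : Measure Z) [IsProbabilityMeasure η] [NullSingletonClass η] {n : ℕ} (hn : 1 ≤ n)
    (α : Fin n → NNReal) (hα : ∑ i, α i = 1) :
    ∃ W : Fin n → Set Z, (∀ l, MeasurableSet (W l)) ∧ Pairwise (Function.onFun Disjoint W) ∧
      (⋃ l, W l) = Set.univ ∧ ∀ l, η (W l) = (α l : ℝ≥0∞) := by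
  cases n with
  | zero => omega
  | succ m =>
    apply exists_partition_aux η m Set.univ MeasurableSet.univ (fun i => (α i : ℝ≥0∞))
    rw [measure_univ, ← ENNReal.coe_finset_sum, hα, ENNReal.coe_one]

/-- From a finite partition, build the measurable map to `Fin n` classifying points. -/
lemma exists_classifying_map {Z : Type} [MeasurableSpace Z] {n : ℕ} {W : Fin n → Set Z}
    (hm : ∀ l, MeasurableSet (W l)) (hd : Pairwise (Function.onFun Disjoint W))
    (hu : (⋃ l, W l) = Set.univ) :
    ∃ ψ : Z → Fin n, Measurable ψ ∧ ∀ l, ψ ⁻¹' {l} = W l := by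
  have hex : ∀ z : Z, ∃ l, z ∈ W l := fun z => Set.mem_iUnion.1 (hu ▸ Set.mem_univ z)
  have key : ∀ z l, z ∈ W l → (hex z).choose = l := by
    intro z l hzl
    by_contra hne
    exact Set.disjoint_left.1 (hd hne) (hex z).choose_spec hzl
  have hpre : ∀ l, (fun z => (hex z).choose) ⁻¹' {l} = W l := by
    intro l; ext z
    simp only [Set.mem_preimage, Set.mem_singleton_iff]
    exact ⟨fun h => h ▸ (hex z).choose_spec, key z l⟩
  exact ⟨fun z => (hex z).choose, measurable_to_countable' (fun l => (hpre l).symm ▸ hm l), hpre⟩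

/-- A measurable map with prescribed fiber measures pushes forward to `discreteMeasure`. -/
lemma map_eq_discreteMeasure {Z : Type} [MeasurableSpace Z] (η : Measure Z) {n : ℕ}
    {ψ : Z → Fin n} (hψ : Measurable ψ) (α : Fin n → NNReal)
    (h : ∀ l, η (ψ ⁻¹' {l}) = (α l : ℝ≥0∞)) :
    Measure.map ψ η = discreteMeasure α := by
  ext u hu
  rw [Measure.map_apply hψ hu]
  classical
  have hdecomp : ψ ⁻¹' u = ⋃ l ∈ Finset.univ.filter (· ∈ u), ψ ⁻¹' {l} := by
    ext z
    simp only [Set.mem_preimage, Set.mem_iUnion, Finset.mem_filter, Finset.mem_univ, true_and,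
      Set.mem_singleton_iff]
    exact ⟨fun hz => ⟨ψ z, hz, rfl⟩, fun ⟨l, hl, hzl⟩ => hzl ▸ hl⟩
  rw [hdecomp, measure_biUnion_finset ?hd (fun l _ => hψ (measurableSet_singleton l))]
  case hd =>
    intro i hi j hj hij
    exact Set.disjoint_left.2 fun z hzi hzj => hij ((Set.mem_singleton_iff.1 hzi).symm.trans
      (Set.mem_singleton_iff.1 hzj))
  rw [Finset.sum_congr rfl (fun l _ => h l)]
  simp only [discreteMeasure, Measure.coe_finset_sum, Measure.coe_smul, Finset.sum_apply,
    Pi.smul_apply, smul_eq_mul]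
  rw [Finset.sum_filter]
  congr 1
  ext l
  rw [Measure.dirac_apply' l hu]
  by_cases hl : l ∈ u <;> simp [hl]

end PartitionMachinery
section MeasureComputation

open MeasureTheory Topology Filter

lemma discrete_prod_apply {n : ℕ} (α : Fin n → NNReal) {X : Type} [MeasurableSpace X]
    (μ : Measure X) [SFinite μ] {S : Set (Fin n × X)} (hS : MeasurableSet S) :
    (discreteMeasure α).prod μ S = ∑ l, (α l : ℝ≥0∞) * μ {x | (l, x) ∈ S} := by
  rw [Measure.prod_apply hS, discreteMeasure, lintegral_finset_sum_measure]
  congr 1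
  ext l
  rw [lintegral_smul_measure, lintegral_dirac]
  rfl

lemma prod_map_apply {C₁ C₂ X : Type} [MeasurableSpace C₁] [MeasurableSpace C₂]
    [MeasurableSpace X] {κ₁ : Measure C₁} {κ₂ : Measure C₂} (μ : Measure X)
    [SFinite κ₁] [SFinite μ] {g : C₁ → C₂} (hg : Measurable g)
    (hmap : Measure.map g κ₁ = κ₂) {S : Set (C₂ × X)} (hS : MeasurableSet S) :
    κ₁.prod μ (Prod.map g id ⁻¹' S) = κ₂.prod μ S := by
  have hmm : Measure.map (Prod.map g id) (κ₁.prod μ) = κ₂.prod μ := by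
    rw [← Measure.map_prod_map _ _ hg measurable_id, hmap, Measure.map_id]
  rw [← hmm, Measure.map_apply (hg.prodMap measurable_id) hS]

lemma lintegral_partition {Z : Type} [MeasurableSpace Z] (η : Measure Z) {ι : Type} [Fintype ι]
    {W : ι → Set Z} (hm : ∀ c, MeasurableSet (W c)) (hd : Pairwise (Function.onFun Disjoint W))
    (hu : (⋃ c, W c) = Set.univ) (f : Z → ℝ≥0∞) :
    ∫⁻ z, f z ∂η = ∑ c, ∫⁻ z in W c, f z ∂η := by
  rw [← MeasureTheory.setLIntegral_univ (μ := η), ← hu, lintegral_iUnion hm hd, tsum_fintype]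

lemma sum_measure_partition {Z : Type} [MeasurableSpace Z] (η : Measure Z) {ι : Type} [Fintype ι]
    {W : ι → Set Z} (hm : ∀ c, MeasurableSet (W c)) (hd : Pairwise (Function.onFun Disjoint W))
    (hu : (⋃ c, W c) = Set.univ) : ∑ c, η (W c) = η Set.univ := by
  rw [← hu, measure_iUnion hd hm, tsum_fintype]

end MeasureComputation

section Numeric

open MeasureTheory

lemma le_add_ofReal_of_toReal_le {x y : ℝ≥0∞} (hx : x ≠ ∞) (hy : y ≠ ∞) {δ : ℝ}
    (h : x.toReal ≤ y.toReal + δ) : x ≤ y + ENNReal.ofReal δ := by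
  calc x = ENNReal.ofReal x.toReal := (ENNReal.ofReal_toReal hx).symm
    _ ≤ ENNReal.ofReal (y.toReal + δ) := ENNReal.ofReal_le_ofReal h
    _ ≤ ENNReal.ofReal y.toReal + ENNReal.ofReal δ := ENNReal.ofReal_add_le
    _ = y + ENNReal.ofReal δ := by rw [ENNReal.ofReal_toReal hy]

lemma abs_toReal_sub_le {x y : ℝ≥0∞} (hx : x ≠ ∞) (hy : y ≠ ∞) {δ : ℝ} (hδ : 0 ≤ δ)
    (h1 : x ≤ y + ENNReal.ofReal δ) (h2 : y ≤ x + ENNReal.ofReal δ) :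
    |x.toReal - y.toReal| ≤ δ := by
  rw [abs_sub_le_iff]
  constructor
  · have := ENNReal.toReal_mono (ENNReal.add_ne_top.2 ⟨hy, ENNReal.ofReal_ne_top⟩) h1
    rw [ENNReal.toReal_add hy ENNReal.ofReal_ne_top, ENNReal.toReal_ofReal hδ] at this
    linarith
  · have := ENNReal.toReal_mono (ENNReal.add_ne_top.2 ⟨hx, ENNReal.ofReal_ne_top⟩) h2
    rw [ENNReal.toReal_add hx ENNReal.ofReal_ne_top, ENNReal.toReal_ofReal hδ] at this
    linarith

lemma abs_sub_le_of_floor_eq {t t' : ℝ} (ht : 0 ≤ t) (ht' : 0 ≤ t') {M : ℕ} (hM : 0 < M)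
    (h : ⌊t * M⌋₊ = ⌊t' * M⌋₊) : |t - t'| ≤ 1 / M := by
  have hM' : (0:ℝ) < M := by exact_mod_cast hM
  have h1 := Nat.floor_le (by positivity : (0:ℝ) ≤ t * M)
  have h2 := Nat.lt_floor_add_one (t * M)
  have h3 := Nat.floor_le (by positivity : (0:ℝ) ≤ t' * M)
  have h4 := Nat.lt_floor_add_one (t' * M)
  rw [h] at h1 h2
  have hc : (M:ℝ) * (1 / M) = 1 := by field_simp
  rw [abs_le]
  constructor <;> nlinarith

end Numeric
section PartC

open MeasureTheory Topology Filter

variable {Γ : Type} [Group Γ]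

lemma setWC_allConvexSums_prod (b : MPAction Γ)
    (Z : Type) [MeasurableSpace Z] [StandardBorelSpace Z] (η : Measure Z)
    [IsProbabilityMeasure η] [NullSingletonClass η] :
    SetWC (allConvexSums b) {(trivialAction Γ Z η).prod b} := by
  intro a ha k P hP F ε hε
  obtain ⟨n, hn, α, hα, rfl⟩ := ha
  obtain ⟨W, hWm, hWd, hWu, hWμ⟩ := exists_partition_with_measures η hn α hα
  obtain ⟨ψ, hψ, hψpre⟩ := exists_classifying_map hWm hWd hWu
  have hTm : Measurable (Prod.map ψ (id : b.X → b.X)) := hψ.prodMap measurable_id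
  refine ⟨(trivialAction Γ Z η).prod b, rfl,
    fun i => Prod.map ψ (id : b.X → b.X) ⁻¹' P i, hP.preimage hTm, fun γ hγ i j => ?_⟩
  rw [MPAction.act_image, MPAction.act_image]
  have hSm : MeasurableSet ((convexSumAction b α hα).act γ⁻¹ ⁻¹' P i ∩ P j) :=
    (((convexSumAction b α hα).act_measurable γ⁻¹) (hP.1 i)).inter (hP.1 j)
  have hmap : Measure.map ψ η = discreteMeasure α :=
    map_eq_discreteMeasure η hψ α (fun l => by rw [hψpre l]; exact hWμ l)
  have hval : ((trivialAction Γ Z η).prod b).μ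
        (((trivialAction Γ Z η).prod b).act γ⁻¹ ⁻¹' (Prod.map ψ (id : b.X → b.X) ⁻¹' P i) ∩
          Prod.map ψ (id : b.X → b.X) ⁻¹' P j)
      = (convexSumAction b α hα).μ ((convexSumAction b α hα).act γ⁻¹ ⁻¹' P i ∩ P j) := by
    have hkey : ((trivialAction Γ Z η).prod b).act γ⁻¹ ⁻¹'
          (Prod.map ψ (id : b.X → b.X) ⁻¹' P i) ∩ Prod.map ψ (id : b.X → b.X) ⁻¹' P j
        = Prod.map ψ (id : b.X → b.X) ⁻¹'
          ((convexSumAction b α hα).act γ⁻¹ ⁻¹' P i ∩ P j) := rfl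
    rw [hkey]
    exact prod_map_apply b.μ hψ hmap hSm
  rw [hval, sub_self, abs_zero]
  exact hε

end PartC
section PartB

open MeasureTheory Topology Filter

lemma nat_telescope (g : ℕ → ℕ) (hg : Monotone g) :
    ∀ n, (∑ i ∈ Finset.range n, (g (i+1) - g i)) = g n - g 0 := by
  intro n
  induction n with
  | zero => simp
  | succ m ih =>
    rw [Finset.sum_range_succ, ih]
    have h1 := hg (Nat.zero_le m)
    have h2 := hg (Nat.le_succ m)
    simp only [Nat.succ_eq_add_one] at *
    omega

/-- Rational approximation of a convex weight vector with common denominator `N`. -/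
lemma exists_nat_weights {n : ℕ} (α : Fin n → NNReal) (hα : ∑ i, α i = 1) {N : ℕ} (hN : 0 < N) :
    ∃ c : Fin n → ℕ, (∑ l, c l) = N ∧ ∀ l, |((c l : ℝ)) / N - (α l : ℝ)| ≤ 1 / N := by
  classical
  have hN' : (0:ℝ) < N := by exact_mod_cast hN
  set α' : ℕ → ℝ := fun i => if h : i < n then (α ⟨i, h⟩ : ℝ) else 0 with hα'
  have hα'nn : ∀ i, 0 ≤ α' i := by
    intro i; rw [hα']; dsimp only; split <;> positivity
  set s : ℕ → ℝ := fun m => ∑ i ∈ Finset.range m, α' i with hs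
  have hsnn : ∀ m, 0 ≤ s m := fun m => Finset.sum_nonneg fun i _ => hα'nn i
  have hs_mono : Monotone s := fun u v huv =>
    Finset.sum_le_sum_of_subset_of_nonneg (Finset.range_subset_range.2 huv) fun i _ _ => hα'nn i
  set g : ℕ → ℕ := fun m => ⌊(N:ℝ) * s m⌋₊ with hg
  have hg_mono : Monotone g := fun u v huv =>
    Nat.floor_mono (mul_le_mul_of_nonneg_left (hs_mono huv) (le_of_lt hN'))
  have hsn : s n = 1 := by
    rw [hs]
    dsimp only
    rw [← Fin.sum_univ_eq_sum_range α' n]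
    have : ∀ i : Fin n, α' i = (α i : ℝ) := by
      intro i; rw [hα']; dsimp only; rw [dif_pos i.isLt]
    rw [Finset.sum_congr rfl fun i _ => this i]
    rw [← NNReal.coe_sum, hα, NNReal.coe_one]
  have hg0 : g 0 = 0 := by simp [hg, hs]
  have hgn : g n = N := by rw [hg]; dsimp only; rw [hsn, mul_one, Nat.floor_natCast]
  refine ⟨fun l => g (l + 1) - g l, ?_, ?_⟩
  · rw [Fin.sum_univ_eq_sum_range (fun i => g (i+1) - g i) n, nat_telescope g hg_mono, hg0, hgn]
    omega
  · intro l
    have hfl1 : (g (l+1) : ℝ) ≤ (N:ℝ) * s (l+1) :=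
      Nat.floor_le (mul_nonneg hN'.le (hsnn _))
    have hfl2 : (N:ℝ) * s (l+1) < g (l+1) + 1 := Nat.lt_floor_add_one _
    have hfl3 : (g l : ℝ) ≤ (N:ℝ) * s l := Nat.floor_le (mul_nonneg hN'.le (hsnn _))
    have hfl4 : (N:ℝ) * s l < g l + 1 := Nat.lt_floor_add_one _
    have hstep : s (l + 1) = s l + (α l : ℝ) := by
      rw [hs]
      dsimp only
      rw [Finset.sum_range_succ]
      congr 1
      rw [hα']
      dsimp only
      rw [dif_pos l.isLt]
    have hcast : ((g (l+1) - g l : ℕ) : ℝ) = (g (l+1) : ℝ) - g l :=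
      Nat.cast_sub (hg_mono (Nat.le_succ l))
    rw [hcast, abs_le]
    have hc : (N:ℝ) * (1 / N) = 1 := by field_simp
    constructor
    · rw [div_sub' hN'.ne', le_div_iff₀ hN', neg_mul]
      nlinarith
    · rw [div_sub' hN'.ne', div_le_iff₀ hN']
      nlinarith

variable {Γ : Type} [Group Γ]

lemma setWC_allConvexSums_uniform (b : MPAction Γ) :
    SetWC (allConvexSums b) (uniformConvexSums b) := by
  intro a ha k P hP F ε hε
  obtain ⟨n, hn, α, hα, rfl⟩ := ha
  -- choose denominator N
  set N : ℕ := ⌈(n:ℝ)/ε⌉₊ + 1 with hN_def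
  have hNpos : 0 < N := Nat.succ_pos _
  have hN' : (0:ℝ) < N := by exact_mod_cast hNpos
  have hNlt : (n:ℝ)/N < ε := by
    rw [div_lt_iff₀ hN']
    have h1 : (n:ℝ)/ε ≤ ⌈(n:ℝ)/ε⌉₊ := Nat.le_ceil _
    have h2 : ((⌈(n:ℝ)/ε⌉₊ : ℝ)) < N := by
      rw [hN_def]; push_cast; linarith
    have := (div_lt_iff₀ hε).1 (lt_of_le_of_lt h1 h2)
    linarith [this]
  obtain ⟨c, hcsum, hcapp⟩ := exists_nat_weights α hα hNpos
  have hcard : Fintype.card (Fin N) = Fintype.card (Σ l : Fin n, Fin (c l)) := by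
    simp only [Fintype.card_fin, Fintype.card_sigma]
    exact hcsum.symm
  set e : Fin N ≃ (Σ l : Fin n, Fin (c l)) := Fintype.equivOfCardEq hcard with he
  set ψ : Fin N → Fin n := fun j => (e j).1 with hψ
  have hψm : Measurable ψ := measurable_of_finite ψ
  have hTm : Measurable (Prod.map ψ (id : b.X → b.X)) := hψm.prodMap measurable_id
  refine ⟨convexSumAction b (fun _ : Fin N => ((N:ℝ≥0))⁻¹) (uniformSum N hNpos),
    ⟨N, hNpos, rfl⟩, fun i => Prod.map ψ (id : b.X → b.X) ⁻¹' P i,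
    hP.preimage hTm, fun γ hγ i j => ?_⟩
  rw [MPAction.act_image, MPAction.act_image]
  have hSm : MeasurableSet ((convexSumAction b α hα).act γ⁻¹ ⁻¹' P i ∩ P j) :=
    (((convexSumAction b α hα).act_measurable γ⁻¹) (hP.1 i)).inter (hP.1 j)
  set S : Set (Fin n × b.X) := (convexSumAction b α hα).act γ⁻¹ ⁻¹' P i ∩ P j with hS_def
  set g : Fin n → ℝ≥0∞ := fun l => b.μ {x | (l, x) ∈ S} with hg_def
  have hg_le : ∀ l, g l ≤ 1 := fun l => prob_le_one
  have hg_ne : ∀ l, g l ≠ ∞ := fun l => ((hg_le l).trans_lt ENNReal.one_lt_top).ne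
  -- value on the source side
  have hva : (convexSumAction b α hα).μ S = ∑ l, (α l : ℝ≥0∞) * g l :=
    discrete_prod_apply α b.μ hSm
  -- value on the target side
  have hkey : (convexSumAction b (fun _ : Fin N => ((N:ℝ≥0))⁻¹) (uniformSum N hNpos)).act γ⁻¹ ⁻¹'
        (Prod.map ψ (id : b.X → b.X) ⁻¹' P i) ∩ Prod.map ψ (id : b.X → b.X) ⁻¹' P j
      = Prod.map ψ (id : b.X → b.X) ⁻¹' S := rfl
  have hvd : (convexSumAction b (fun _ : Fin N => ((N:ℝ≥0))⁻¹) (uniformSum N hNpos)).μ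
        (Prod.map ψ (id : b.X → b.X) ⁻¹' S)
      = ∑ l, ((c l : ℝ≥0∞) * (((N:ℝ≥0))⁻¹ : ℝ≥0∞)) * g l := by
    have h1 := discrete_prod_apply (fun _ : Fin N => ((N:ℝ≥0))⁻¹) b.μ (hTm hSm)
    have h2 : ∀ j' : Fin N, b.μ {x | (j', x) ∈ Prod.map ψ (id : b.X → b.X) ⁻¹' S}
        = g (ψ j') := fun j' => rfl
    calc (convexSumAction b (fun _ : Fin N => ((N:ℝ≥0))⁻¹) (uniformSum N hNpos)).μ
          (Prod.map ψ (id : b.X → b.X) ⁻¹' S)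
        = ∑ j' : Fin N, ((((N:ℝ≥0))⁻¹ : ℝ≥0∞)) * g (ψ j') := by
          refine h1.trans (Finset.sum_congr rfl fun j' _ => ?_)
          rw [ENNReal.coe_inv (by exact_mod_cast hNpos.ne' : (N:ℝ≥0) ≠ 0)]
          rfl
      _ = ∑ p : (Σ l : Fin n, Fin (c l)), ((((N:ℝ≥0))⁻¹ : ℝ≥0∞)) * g p.1 :=
          Fintype.sum_equiv e _ _ (fun j' => rfl)
      _ = ∑ l, ((c l : ℝ≥0∞) * (((N:ℝ≥0))⁻¹ : ℝ≥0∞)) * g l := by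
          rw [← Finset.univ_sigma_univ, Finset.sum_sigma]
          refine Finset.sum_congr rfl fun l _ => ?_
          have hconst : ∀ s : Fin (c l),
              ((((N:ℝ≥0))⁻¹ : ℝ≥0∞)) * g ((⟨l, s⟩ : Σ l' : Fin n, Fin (c l')).1)
                = ((((N:ℝ≥0))⁻¹ : ℝ≥0∞)) * g l := fun s => rfl
          rw [Finset.sum_congr rfl fun s _ => hconst s, Finset.sum_const, Finset.card_univ,
            Fintype.card_fin, nsmul_eq_mul, ← mul_assoc]
  rw [hkey, show (convexSumAction b α hα).μ ((convexSumAction b α hα).act γ⁻¹ ⁻¹' P i ∩ P j) = _ from hva]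
  erw [hvd]
  have hne1 : ∀ l ∈ Finset.univ, (α l : ℝ≥0∞) * g l ≠ ∞ := fun l _ =>
    ENNReal.mul_ne_top ENNReal.coe_ne_top (hg_ne l)
  have hne2 : ∀ l ∈ Finset.univ, ((c l : ℝ≥0∞) * (((N:ℝ≥0))⁻¹ : ℝ≥0∞)) * g l ≠ ∞ := fun l _ =>
    ENNReal.mul_ne_top (ENNReal.mul_ne_top (ENNReal.natCast_ne_top _)
      (ENNReal.inv_ne_top.2 (by exact_mod_cast hNpos.ne')))
      (hg_ne l)
  rw [ENNReal.toReal_sum hne1, ENNReal.toReal_sum hne2]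
  have hterm1 : ∀ l : Fin n, ((α l : ℝ≥0∞) * g l).toReal = (α l : ℝ) * (g l).toReal :=
    fun l => by rw [ENNReal.toReal_mul, ENNReal.coe_toReal]
  have hterm2 : ∀ l : Fin n, (((c l : ℝ≥0∞) * (((N:ℝ≥0))⁻¹ : ℝ≥0∞)) * g l).toReal
      = ((c l : ℝ) / N) * (g l).toReal := fun l => by
    rw [ENNReal.toReal_mul, ENNReal.toReal_mul, ENNReal.toReal_natCast, ENNReal.toReal_inv,
      ENNReal.coe_toReal, NNReal.coe_natCast, div_eq_mul_inv]
  rw [Finset.sum_congr rfl fun l _ => hterm1 l, Finset.sum_congr rfl fun l _ => hterm2 l]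
  have hGnn : ∀ l : Fin n, 0 ≤ (g l).toReal := fun l => ENNReal.toReal_nonneg
  have hG1 : ∀ l : Fin n, (g l).toReal ≤ 1 := fun l => by
    simpa using ENNReal.toReal_mono ENNReal.one_ne_top (hg_le l)
  calc |(∑ l, (α l:ℝ) * (g l).toReal) - ∑ l, ((c l:ℝ)/N) * (g l).toReal|
      = |∑ l, ((α l:ℝ) - (c l:ℝ)/N) * (g l).toReal| := by
        rw [← Finset.sum_sub_distrib]
        congr 1
        exact Finset.sum_congr rfl fun l _ => by ring
    _ ≤ ∑ l, |((α l:ℝ) - (c l:ℝ)/N) * (g l).toReal| := Finset.abs_sum_le_sum_abs _ _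
    _ ≤ ∑ _l : Fin n, (1/N : ℝ) := Finset.sum_le_sum fun l _ => by
        rw [abs_mul]
        have h1 : |(α l:ℝ) - (c l:ℝ)/N| ≤ 1/N := by rw [abs_sub_comm]; exact hcapp l
        have h2 : |(g l).toReal| ≤ 1 := by rw [abs_of_nonneg (hGnn l)]; exact hG1 l
        calc |(α l:ℝ) - (c l:ℝ)/N| * |(g l).toReal| ≤ (1/N) * 1 :=
              mul_le_mul h1 h2 (abs_nonneg _) (by positivity)
          _ = 1/N := mul_one _
    _ = n * (1/N) := by rw [Finset.sum_const, Finset.card_univ, Fintype.card_fin, nsmul_eq_mul]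
    _ = (n:ℝ)/N := by ring
    _ < ε := hNlt

end PartB
section PartA

open MeasureTheory Topology Filter

variable {Γ : Type} [Group Γ]

lemma setWC_prod_allConvexSums (b : MPAction Γ)
    (Z : Type) [MeasurableSpace Z] [StandardBorelSpace Z] (η : Measure Z)
    [IsProbabilityMeasure η] :
    SetWC {(trivialAction Γ Z η).prod b} (allConvexSums b) := by
  classical
  intro a ha k P hP F ε hε
  rw [Set.mem_singleton_iff] at ha
  subst ha
  haveI : Nonempty Z := by
    by_contra h
    rw [not_nonempty_iff] at h
    have h0 : η Set.univ = 0 := by rw [Set.univ_eq_empty_iff.2 h]; exact measure_empty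
    rw [measure_univ] at h0
    exact one_ne_zero h0
  obtain ⟨z₀⟩ := ‹Nonempty Z›
  -- accuracy parameter M
  set M : ℕ := ⌈1/ε⌉₊ + 1 with hM_def
  have hMpos : 0 < M := Nat.succ_pos _
  have hM' : (0:ℝ) < M := by exact_mod_cast hMpos
  have hMε : 1/(M:ℝ) < ε := by
    rw [div_lt_iff₀ hM']
    have h1 : 1/ε ≤ (⌈1/ε⌉₊:ℝ) := Nat.le_ceil _
    have h2 : ((⌈1/ε⌉₊:ℝ)) < M := by rw [hM_def]; push_cast; linarith
    have h3 := (div_lt_iff₀ hε).1 (lt_of_le_of_lt h1 h2)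
    linarith
  -- the statistics
  set Sfun : ↥F × Fin k × Fin k → Set (Z × b.X) := fun p =>
    ((trivialAction Γ Z η).prod b).act ((p.1 : Γ))⁻¹ ⁻¹' P p.2.1 ∩ P p.2.2 with hSfun
  have hSm : ∀ p, MeasurableSet (Sfun p) := fun p =>
    ((((trivialAction Γ Z η).prod b).act_measurable _) (hP.1 _)).inter (hP.1 _)
  set f : ↥F × Fin k × Fin k → Z → ℝ≥0∞ := fun p z => b.μ (Prod.mk z ⁻¹' Sfun p) with hf
  have hfm : ∀ p, Measurable (f p) := fun p => measurable_measure_prodMk_left (hSm p)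
  have hf_le1 : ∀ p z, f p z ≤ 1 := fun p z => prob_le_one
  have hf_ne : ∀ p z, f p z ≠ ∞ := fun p z => ((hf_le1 p z).trans_lt ENNReal.one_lt_top).ne
  have hf0 : ∀ p z, 0 ≤ (f p z).toReal := fun p z => ENNReal.toReal_nonneg
  have hf1 : ∀ p z, (f p z).toReal ≤ 1 := fun p z => by
    simpa using ENNReal.toReal_mono ENNReal.one_ne_top (hf_le1 p z)
  -- the cell map
  haveI : DecidableEq (↥F × Fin k × Fin k) := Classical.decEq _
  set u : ℕ → Fin (M+1) := fun v => ⟨min v M, by omega⟩ with hu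
  set cmap : Z → ((↥F × Fin k × Fin k) → Fin (M+1)) :=
    fun z p => u ⌊(f p z).toReal * (M:ℝ)⌋₊ with hcmap
  have hfloor_le : ∀ p z, ⌊(f p z).toReal * (M:ℝ)⌋₊ ≤ M := by
    intro p z
    have h1 : (f p z).toReal * M ≤ M := by nlinarith [hf1 p z, hf0 p z]
    calc ⌊(f p z).toReal * (M:ℝ)⌋₊ ≤ ⌊(M:ℝ)⌋₊ := Nat.floor_mono h1
      _ = M := Nat.floor_natCast M
  have hcm : Measurable cmap := by
    rw [measurable_pi_iff]
    intro p
    have h1 : Measurable fun z => (f p z).toReal * (M:ℝ) := ((hfm p).ennreal_toReal).mul_const _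
    have h2 : Measurable fun z => ⌊(f p z).toReal * (M:ℝ)⌋₊ := Nat.measurable_floor.comp h1
    exact (measurable_from_nat (f := u)).comp h2
  have hcell : ∀ z z', cmap z = cmap z' → ∀ p, |(f p z).toReal - (f p z').toReal| ≤ 1/M := by
    intro z z' hzz p
    have h1 : cmap z p = cmap z' p := congrFun hzz p
    have h2 : min ⌊(f p z).toReal * (M:ℝ)⌋₊ M = min ⌊(f p z').toReal * (M:ℝ)⌋₊ M :=
      congrArg Fin.val h1
    rw [min_eq_left (hfloor_le p z), min_eq_left (hfloor_le p z')] at h2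
    exact abs_sub_le_of_floor_eq (hf0 p z) (hf0 p z') hMpos h2
  -- the cells
  set Zc : ((↥F × Fin k × Fin k) → Fin (M+1)) → Set Z := fun c₀ => cmap ⁻¹' {c₀} with hZc
  have hsing : ∀ c₀ : (↥F × Fin k × Fin k) → Fin (M+1), MeasurableSet ({c₀} :
      Set ((↥F × Fin k × Fin k) → Fin (M+1))) := by
    intro c₀
    have hrw : ({c₀} : Set ((↥F × Fin k × Fin k) → Fin (M+1)))
        = ⋂ p, (fun g => g p) ⁻¹' {c₀ p} := by
      ext g
      simp only [Set.mem_singleton_iff, Set.mem_iInter, Set.mem_preimage, funext_iff]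
    rw [hrw]
    exact MeasurableSet.iInter fun p => (measurable_pi_apply p) (measurableSet_singleton _)
  have hZm : ∀ c₀, MeasurableSet (Zc c₀) := fun c₀ => hcm (hsing c₀)
  have hZd : Pairwise (Function.onFun Disjoint Zc) := by
    intro c₁ c₂ h12
    exact Set.disjoint_left.2 fun z hz1 hz2 => h12 (hz1.symm.trans hz2)
  have hZu : (⋃ c₀, Zc c₀) = Set.univ :=
    Set.eq_univ_of_forall fun z => Set.mem_iUnion.2 ⟨cmap z, rfl⟩
  -- the weights
  set NN := Fintype.card ((↥F × Fin k × Fin k) → Fin (M+1)) with hNN_def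
  have hNN : 1 ≤ NN := Fintype.card_pos_iff.2 ⟨fun _ => ⟨0, by omega⟩⟩
  set e := (Fintype.equivFin ((↥F × Fin k × Fin k) → Fin (M+1))).symm with he
  set α : Fin NN → ℝ≥0 := fun l => (η (Zc (e l))).toNNReal with hα_def
  have hαcoe : ∀ l, (α l : ℝ≥0∞) = η (Zc (e l)) := fun l =>
    ENNReal.coe_toNNReal (measure_ne_top η _)
  have hsumZ : ∑ c₀, η (Zc c₀) = 1 := by
    rw [sum_measure_partition η hZm hZd hZu, measure_univ]
  have hα : ∑ l, α l = 1 := by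
    have h2 : ∑ l : Fin NN, (α l : ℝ≥0∞) = 1 := by
      rw [Finset.sum_congr rfl fun l _ => hαcoe l,
        Fintype.sum_equiv e (fun l => η (Zc (e l))) (fun c₀ => η (Zc c₀)) (fun l => rfl)]
      exact hsumZ
    rw [← ENNReal.coe_finset_sum] at h2
    exact_mod_cast h2
  -- representative points
  set zc : ((↥F × Fin k × Fin k) → Fin (M+1)) → Z := fun c₀ =>
    if h : (Zc c₀).Nonempty then h.choose else z₀ with hzc_def
  have hzc : ∀ c₀, (Zc c₀).Nonempty → zc c₀ ∈ Zc c₀ := by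
    intro c₀ hne
    rw [hzc_def]
    dsimp only
    rw [dif_pos hne]
    exact hne.choose_spec
  -- the comparison map
  set T : Fin NN × b.X → Z × b.X := fun p => (zc (e p.1), p.2) with hT
  have hTm : Measurable T :=
    ((measurable_of_finite (fun l : Fin NN => zc (e l))).comp measurable_fst).prodMk
      measurable_snd
  refine ⟨convexSumAction b α hα, ⟨NN, hNN, α, hα, rfl⟩, fun i => T ⁻¹' P i,
    hP.preimage hTm, fun γ hγ i j => ?_⟩
  set p₀ : ↥F × Fin k × Fin k := (⟨γ, hγ⟩, i, j) with hp₀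
  rw [MPAction.act_image, MPAction.act_image]
  have hSp₀ : ((trivialAction Γ Z η).prod b).act γ⁻¹ ⁻¹' P i ∩ P j = Sfun p₀ := rfl
  have hkey : (convexSumAction b α hα).act γ⁻¹ ⁻¹' (T ⁻¹' P i) ∩ T ⁻¹' P j
      = T ⁻¹' Sfun p₀ := rfl
  rw [hSp₀, hkey]
  set δ' : ℝ≥0∞ := ENNReal.ofReal (1/M) with hδ'
  -- value on the product side
  have hX1 : ((trivialAction Γ Z η).prod b).μ (Sfun p₀) = ∫⁻ z, f p₀ z ∂η :=
    Measure.prod_apply (hSm p₀)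
  -- value on the convex-sum side
  haveI := discreteMeasure_isProbability α hα
  have hX2 : (convexSumAction b α hα).μ (T ⁻¹' Sfun p₀)
      = ∑ c₀, η (Zc c₀) * f p₀ (zc c₀) := by
    have h1 := discrete_prod_apply α b.μ (hTm (hSm p₀))
    have h2 : ∀ l : Fin NN, b.μ {x | (l, x) ∈ T ⁻¹' Sfun p₀} = f p₀ (zc (e l)) :=
      fun l => rfl
    calc (convexSumAction b α hα).μ (T ⁻¹' Sfun p₀)
        = ∑ l : Fin NN, (α l : ℝ≥0∞) * b.μ {x | (l, x) ∈ T ⁻¹' Sfun p₀} := h1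
      _ = ∑ l : Fin NN, η (Zc (e l)) * f p₀ (zc (e l)) :=
          Finset.sum_congr rfl fun l _ => by rw [h2 l, hαcoe l]
      _ = ∑ c₀, η (Zc c₀) * f p₀ (zc c₀) :=
          Fintype.sum_equiv e _ _ (fun l => rfl)
  -- per-cell estimates
  have hsplit : ∫⁻ z, f p₀ z ∂η = ∑ c₀, ∫⁻ z in Zc c₀, f p₀ z ∂η :=
    lintegral_partition η hZm hZd hZu (f p₀)
  have hcell_up : ∀ c₀, ∫⁻ z in Zc c₀, f p₀ z ∂η ≤ (f p₀ (zc c₀) + δ') * η (Zc c₀) := by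
    intro c₀
    rcases Set.eq_empty_or_nonempty (Zc c₀) with hemp | hne
    · rw [hemp]
      simp
    · have hz₀ := hzc c₀ hne
      have hb : ∀ z ∈ Zc c₀, f p₀ z ≤ f p₀ (zc c₀) + δ' := by
        intro z hz
        have hceq : cmap z = cmap (zc c₀) := by
          have e1 : cmap z = c₀ := hz
          have e2 : cmap (zc c₀) = c₀ := hz₀
          rw [e1, e2]
        have habs := abs_le.1 (hcell z (zc c₀) hceq p₀)
        exact le_add_ofReal_of_toReal_le (hf_ne _ _) (hf_ne _ _) (by linarith [habs.2])
      calc ∫⁻ z in Zc c₀, f p₀ z ∂η ≤ ∫⁻ _z in Zc c₀, (f p₀ (zc c₀) + δ') ∂η :=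
            setLIntegral_mono measurable_const hb
        _ = (f p₀ (zc c₀) + δ') * η (Zc c₀) := setLIntegral_const _ _
  have hcell_lo : ∀ c₀, f p₀ (zc c₀) * η (Zc c₀)
      ≤ (∫⁻ z in Zc c₀, f p₀ z ∂η) + δ' * η (Zc c₀) := by
    intro c₀
    rcases Set.eq_empty_or_nonempty (Zc c₀) with hemp | hne
    · rw [hemp]
      simp
    · have hz₀ := hzc c₀ hne
      have hb : ∀ z ∈ Zc c₀, f p₀ (zc c₀) ≤ f p₀ z + δ' := by
        intro z hz
        have hceq : cmap z = cmap (zc c₀) := by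
          have e1 : cmap z = c₀ := hz
          have e2 : cmap (zc c₀) = c₀ := hz₀
          rw [e1, e2]
        have habs := abs_le.1 (hcell z (zc c₀) hceq p₀)
        exact le_add_ofReal_of_toReal_le (hf_ne _ _) (hf_ne _ _) (by linarith [habs.1])
      calc f p₀ (zc c₀) * η (Zc c₀) = ∫⁻ _z in Zc c₀, f p₀ (zc c₀) ∂η :=
            (setLIntegral_const _ _).symm
        _ ≤ ∫⁻ z in Zc c₀, (f p₀ z + δ') ∂η := setLIntegral_mono ((hfm p₀).add measurable_const)
            (fun z hz => hb z hz)
        _ = (∫⁻ z in Zc c₀, f p₀ z ∂η) + δ' * η (Zc c₀) := by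
            rw [lintegral_add_right _ measurable_const, setLIntegral_const]
  -- global estimates
  have hup : ((trivialAction Γ Z η).prod b).μ (Sfun p₀)
      ≤ (convexSumAction b α hα).μ (T ⁻¹' Sfun p₀) + δ' := by
    rw [hX1, hX2, hsplit]
    calc ∑ c₀, ∫⁻ z in Zc c₀, f p₀ z ∂η
        ≤ ∑ c₀, (f p₀ (zc c₀) + δ') * η (Zc c₀) := Finset.sum_le_sum fun c₀ _ => hcell_up c₀
      _ = ∑ c₀, (η (Zc c₀) * f p₀ (zc c₀) + δ' * η (Zc c₀)) := by
          refine Finset.sum_congr rfl fun c₀ _ => ?_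
          rw [add_mul, mul_comm (f p₀ (zc c₀))]
      _ = (∑ c₀, η (Zc c₀) * f p₀ (zc c₀)) + ∑ c₀, δ' * η (Zc c₀) :=
          Finset.sum_add_distrib
      _ = (∑ c₀, η (Zc c₀) * f p₀ (zc c₀)) + δ' := by
          rw [← Finset.mul_sum, hsumZ, mul_one]
  have hlo : (convexSumAction b α hα).μ (T ⁻¹' Sfun p₀)
      ≤ ((trivialAction Γ Z η).prod b).μ (Sfun p₀) + δ' := by
    rw [hX1, hX2, hsplit]
    calc ∑ c₀, η (Zc c₀) * f p₀ (zc c₀)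
        = ∑ c₀, f p₀ (zc c₀) * η (Zc c₀) := by
          exact Finset.sum_congr rfl fun c₀ _ => mul_comm _ _
      _ ≤ ∑ c₀, ((∫⁻ z in Zc c₀, f p₀ z ∂η) + δ' * η (Zc c₀)) :=
          Finset.sum_le_sum fun c₀ _ => hcell_lo c₀
      _ = (∑ c₀, ∫⁻ z in Zc c₀, f p₀ z ∂η) + ∑ c₀, δ' * η (Zc c₀) :=
          Finset.sum_add_distrib
      _ = (∑ c₀, ∫⁻ z in Zc c₀, f p₀ z ∂η) + δ' := by
          rw [← Finset.mul_sum, hsumZ, mul_one]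
  have hfinal := abs_toReal_sub_le (measure_ne_top _ _) (measure_ne_top _ _)
    (by positivity : (0:ℝ) ≤ 1/M) (hδ' ▸ hup) (hδ' ▸ hlo)
  exact lt_of_le_of_lt hfinal hMε

end PartA
/-- **Lemma (Tucker-Drob, Lemma 3.2).** Let `b` be a measure preserving action of a
countable group `Γ`.  Let `B₁ = {ι_{η_{α(n)}} × b : n ≥ 1}` with uniform weights
`α(n) = (1/n, …, 1/n)` and `B₂ = {ι_{η_α} × b : n ≥ 1, α ∈ [0,1]^n, Σ α_i = 1}`.
Then `ι × b`, `B₁` and `B₂` are pairwise weakly equivalent as sets of actions. -/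
theorem stmt10 (Γ : Type) [Group Γ] [Countable Γ] (b : MPAction Γ)
    (Z : Type) [MeasurableSpace Z] [StandardBorelSpace Z] (η : Measure Z)
    [IsProbabilityMeasure η] [NullSingletonClass η] :
    SetWE {(trivialAction Γ Z η).prod b} (uniformConvexSums b) ∧
    SetWE {(trivialAction Γ Z η).prod b} (allConvexSums b) ∧
    SetWE (uniformConvexSums b) (allConvexSums b) := by
  have h1 : SetWC {(trivialAction Γ Z η).prod b} (allConvexSums b) :=
    setWC_prod_allConvexSums b Z η
  have h2 : SetWC (allConvexSums b) {(trivialAction Γ Z η).prod b} :=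
    setWC_allConvexSums_prod b Z η
  have h3 : SetWC (allConvexSums b) (uniformConvexSums b) := setWC_allConvexSums_uniform b
  have h4 : SetWC (uniformConvexSums b) (allConvexSums b) := by
    apply SetWC.of_subset
    rintro d ⟨n, hn, rfl⟩
    exact ⟨n, hn, _, _, rfl⟩
  exact ⟨⟨h1.trans h3, h4.trans h2⟩, ⟨h1, h2⟩, ⟨h4, h3⟩⟩
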